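/- Let η be an ordinal with η ∈ B(η), and for any ordinal β define β̂ := η + ω^(Ω+β). Then: (i) if α ∈ B(η+1) then α̂ ∈ B(α̂) and ψ(α̂) ∈ B(α̂+1); (ii) if α₀ ∈ B(η+1) and α₀ < α then ψ(α̂₀) < ψ(α̂). -/

import Mathlib

open Ordinal

/-- The derivative of a bounded family of normal functions (removed from Mathlib; old definition). -/
noncomputable def derivBFamily.{u, v} (o : Ordinal.{u}) (f : ∀ b < o, Ordinal.{max u v} → Ordinal.{max u v}) :
    Ordinal.{max u v} → Ordinal.{max u v} :=
  derivFamily (familyOfBFamily o f)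

/-- The binary Veblen function: `veblen 0 β = ω ^ β`, and for `α > 0`,
`veblen α` enumerates the common fixed points of `veblen γ` for `γ < α`. -/
noncomputable def veblen : Ordinal → Ordinal → Ordinal :=
  WellFounded.fix Ordinal.lt_wf
    (fun α ih => if α = 0 then fun β => omega0 ^ β
      else derivBFamily.{0,0} α (fun ξ h => ih ξ h))

/-- The set of strongly critical ordinals. -/
def StronglyCritical (γ : Ordinal) : Prop := _root_.veblen γ 0 = γ

/-- `Gamma β` is the `β`-th strongly critical ordinal. -/
noncomputable def Gamma : Ordinal → Ordinal :=
  enumOrd {γ | StronglyCritical γ}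

/-- The least uncountable cardinal (as an ordinal) greater than `θ`. -/
noncomputable def OmegaB (θ : Ordinal) : Ordinal :=
  sInf {o | θ < o ∧ o.card.ord = o ∧ Cardinal.aleph0 < o.card}

/-- Closure of `{0, Ω} ∪ {Γ_β : β ≤ θ}` under `+`, `veblen` and the
given partial collapsing function `f` on arguments below `α`. -/
def closB (θ α : Ordinal) (f : ∀ ξ, ξ < α → Ordinal) : Set Ordinal :=
  ⋂₀ {S : Set Ordinal |
      0 ∈ S ∧ OmegaB θ ∈ S ∧ (∀ β ≤ θ, Gamma β ∈ S) ∧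
      (∀ x ∈ S, ∀ y ∈ S, x + y ∈ S) ∧
      (∀ x ∈ S, ∀ y ∈ S, _root_.veblen x y ∈ S) ∧
      (∀ ξ (h : ξ < α), ξ ∈ S → f ξ h ∈ S)}

/-- The relativised collapsing function `ψ_θ`. -/
noncomputable def psiB (θ : Ordinal) : Ordinal → Ordinal :=
  WellFounded.fix Ordinal.lt_wf
    (fun α ih => sInf {β | β ∉ closB θ α (fun ξ h => ih ξ h)})

/-- The relativised collapsing hierarchy `B_θ(α)`. -/
def BB (θ α : Ordinal) : Set Ordinal :=
  closB θ α (fun ξ _ => psiB θ ξ)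

/-- The least strongly critical ordinal strictly above `δ`. -/
noncomputable def gammaSucc (δ : Ordinal) : Ordinal :=
  sInf {γ | δ < γ ∧ StronglyCritical γ}

set_option linter.deprecated false

/-! ### Basic facts about `_root_.veblen` -/

theorem veblen_def (γ : Ordinal) :
    _root_.veblen γ = if γ = 0 then fun β => omega0 ^ β
      else derivBFamily.{0,0} γ (fun ξ _ => _root_.veblen ξ) := by
  conv_lhs => rw [_root_.veblen, WellFounded.fix_eq]
  rfl

theorem _root_.veblen_zero (b : Ordinal) : _root_.veblen 0 b = omega0 ^ b := by
  rw [veblen_def]; simp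

theorem _root_.isNormal_veblen (γ : Ordinal) : Order.IsNormal (_root_.veblen γ) := by
  rw [veblen_def]
  split
  · exact isNormal_opow one_lt_omega0
  · exact isNormal_derivFamily _

theorem veblen_fp {β γ : Ordinal} (h : β < γ) (a : Ordinal) :
    _root_.veblen β (_root_.veblen γ a) = _root_.veblen γ a := by
  have hγ : γ ≠ 0 := (pos_iff_ne_zero).1 ((show (0 : Ordinal) ≤ β from zero_le).trans_lt h)
  rw [veblen_def γ, if_neg hγ]
  have hF := familyOfBFamily_enum γ (fun ξ (_ : ξ < γ) => _root_.veblen ξ) β h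
  have := derivFamily_fp (f := familyOfBFamily γ (fun ξ (_ : ξ < γ) => _root_.veblen ξ))
    (i := enum (α := γ.ToType) (· < ·) ⟨β, Set.mem_Iio.2 (h.trans_eq (type_toType _).symm)⟩)
    (by rw [hF]; exact _root_.isNormal_veblen β) a
  rw [hF] at this
  exact this

theorem _root_.veblen_pos (γ a : Ordinal) : 0 < _root_.veblen γ a := by
  rcases eq_or_ne γ 0 with rfl | hγ
  · rw [_root_.veblen_zero]; exact opow_pos a omega0_pos
  · have h := veblen_fp (pos_iff_ne_zero.2 hγ) a
    rw [_root_.veblen_zero] at h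
    rw [← h]
    exact opow_pos _ omega0_pos

theorem veblen_zero_lt {β γ : Ordinal} (h : β < γ) : _root_.veblen β 0 < _root_.veblen γ 0 := by
  have h1 : _root_.veblen β (_root_.veblen γ 0) = _root_.veblen γ 0 := veblen_fp h 0
  have h2 : _root_.veblen β 0 < _root_.veblen β (_root_.veblen γ 0) :=
    (_root_.isNormal_veblen β).strictMono (_root_.veblen_pos γ 0)
  rwa [h1] at h2

theorem veblen_zero_le {β γ : Ordinal} (h : β ≤ γ) : _root_.veblen β 0 ≤ _root_.veblen γ 0 := by
  rcases lt_or_eq_of_le h with h | rfl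
  · exact (veblen_zero_lt h).le
  · rfl

theorem _root_.isNormal_veblen_zero : Order.IsNormal (fun γ => _root_.veblen γ 0) := by
  refine Order.isNormal_iff.2 ⟨fun _ _ hab => veblen_zero_lt hab, ?_⟩
  · intro l hl a
    · intro H
      set s : Ordinal := bsup l (fun β _ => _root_.veblen β 0) with hs
      have hsle : s ≤ a := bsup_le fun β hβ => H β hβ
      refine le_trans ?_ hsle
      have hfix : ∀ ξ, ξ < l → _root_.veblen ξ s ≤ s := by
        intro ξ hξ
        rw [hs, Ordinal.IsNormal.bsup (_root_.isNormal_veblen ξ) (fun β _ => _root_.veblen β 0) hl.pos.ne']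
        apply bsup_le
        intro β hβ
        have hm : max β ξ < l := max_lt hβ hξ
        have hm1 : Order.succ (max β ξ) < l := hl.succ_lt hm
        calc _root_.veblen ξ (_root_.veblen β 0)
            ≤ _root_.veblen ξ (_root_.veblen (Order.succ (max β ξ)) 0) :=
              (_root_.isNormal_veblen ξ).monotone
                (veblen_zero_le ((le_max_left β ξ).trans (Order.le_succ _)))
          _ = _root_.veblen (Order.succ (max β ξ)) 0 :=
              veblen_fp ((le_max_right β ξ).trans_lt (Order.lt_succ _)) 0
          _ ≤ s := le_bsup _ _ hm1
      show _root_.veblen l 0 ≤ s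
      rw [veblen_def l, if_neg hl.pos.ne']
      show derivFamily (familyOfBFamily l (fun ξ _ => _root_.veblen ξ)) 0 ≤ s
      rw [derivFamily_zero]
      exact nfpFamily_le_fp (fun i => (_root_.isNormal_veblen _).monotone)
        (show (0 : Ordinal) ≤ s from zero_le) (fun i => hfix (typein (α := l.ToType) (· < ·) i)
          ((typein_lt_type _ i).trans_eq (type_toType l)))

theorem not_bddAbove_stronglyCritical : ¬ BddAbove {γ | StronglyCritical γ} := by
  rw [not_bddAbove_iff]
  intro a
  refine ⟨nfp (fun γ => _root_.veblen γ 0) (Order.succ a), ?_, ?_⟩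
  · exact nfp_fp _root_.isNormal_veblen_zero _
  · exact (Order.lt_succ a).trans_le (le_nfp _ _)

theorem Gamma_mono : Monotone Gamma :=
  (enumOrd_strictMono not_bddAbove_stronglyCritical).monotone

/-! ### Basic facts about `BB` and `psiB` -/

theorem mem_BB {θ α x : Ordinal} :
    x ∈ BB θ α ↔ ∀ S : Set Ordinal,
      (0 ∈ S ∧ OmegaB θ ∈ S ∧ (∀ β ≤ θ, Gamma β ∈ S) ∧
      (∀ x ∈ S, ∀ y ∈ S, x + y ∈ S) ∧
      (∀ x ∈ S, ∀ y ∈ S, _root_.veblen x y ∈ S) ∧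
      (∀ ξ (h : ξ < α), ξ ∈ S → psiB θ ξ ∈ S)) → x ∈ S :=
  Set.mem_sInter

theorem BB_mono {θ α α' : Ordinal} (h : α ≤ α') : BB θ α ⊆ BB θ α' := by
  intro x hx
  rw [mem_BB] at hx ⊢
  intro S hS
  obtain ⟨h0, hΩ, hΓ, hadd, hveb, hpsi⟩ := hS
  exact hx S ⟨h0, hΩ, hΓ, hadd, hveb, fun ξ hlt hmem => hpsi ξ (hlt.trans_le h) hmem⟩

theorem zero_mem_BB (θ α : Ordinal) : (0 : Ordinal) ∈ BB θ α :=
  mem_BB.2 fun _ hS => hS.1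

theorem OmegaB_mem_BB (θ α : Ordinal) : OmegaB θ ∈ BB θ α :=
  mem_BB.2 fun _ hS => hS.2.1

theorem add_mem_BB {θ α x y : Ordinal} (hx : x ∈ BB θ α) (hy : y ∈ BB θ α) :
    x + y ∈ BB θ α :=
  mem_BB.2 fun S hS => hS.2.2.2.1 x (mem_BB.1 hx S hS) y (mem_BB.1 hy S hS)

theorem veblen_mem_BB {θ α x y : Ordinal} (hx : x ∈ BB θ α) (hy : y ∈ BB θ α) :
    _root_.veblen x y ∈ BB θ α :=
  mem_BB.2 fun S hS => hS.2.2.2.2.1 x (mem_BB.1 hx S hS) y (mem_BB.1 hy S hS)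

theorem psiB_mem_BB {θ α ξ : Ordinal} (hlt : ξ < α) (hξ : ξ ∈ BB θ α) :
    psiB θ ξ ∈ BB θ α :=
  mem_BB.2 fun S hS => hS.2.2.2.2.2 ξ hlt (mem_BB.1 hξ S hS)

/-- The complement of `BB θ α` is nonempty. -/
theorem exists_not_mem_BB (θ α : Ordinal) : ∃ β, β ∉ BB θ α := by
  set P : Ordinal := bsup α (fun ξ _ => psiB θ ξ) with hP
  set b : Ordinal := max (max (OmegaB θ) (Gamma θ)) P with hb
  set Λ : Ordinal := nfp (fun γ => _root_.veblen γ 0) (Order.succ b) with hΛ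
  have hΛfix : _root_.veblen Λ 0 = Λ := nfp_fp _root_.isNormal_veblen_zero _
  have hbΛ : b < Λ := (Order.lt_succ b).trans_le (le_nfp _ _)
  have hΛpos : 0 < Λ := (show (0 : Ordinal) ≤ b from zero_le).trans_lt hbΛ
  have hvfix : ∀ x < Λ, _root_.veblen x Λ = Λ := by
    intro x hx
    have h1 := veblen_fp hx 0
    rwa [hΛfix] at h1
  have homega : omega0 ^ Λ = Λ := by
    have := hvfix 0 hΛpos
    rwa [_root_.veblen_zero] at this
  refine ⟨Λ, fun hmem => ?_⟩
  have : Λ ∈ Set.Iio Λ := by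
    refine mem_BB.1 hmem (Set.Iio Λ) ⟨hΛpos, ?_, ?_, ?_, ?_, ?_⟩
    · exact ((le_max_left _ _).trans (le_max_left _ _)).trans_lt hbΛ
    · intro β hβ
      exact ((Gamma_mono hβ).trans ((le_max_right _ _).trans (le_max_left _ _))).trans_lt hbΛ
    · intro x hx y hy
      have := principal_add_omega0_opow Λ (a := x) (b := y)
      rw [homega] at this
      exact this hx hy
    · intro x hx y hy
      have h1 : _root_.veblen x y < _root_.veblen x Λ := (_root_.isNormal_veblen x).strictMono hy
      rwa [hvfix x hx] at h1
    · intro ξ hlt _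
      exact ((le_bsup (fun ξ _ => psiB θ ξ) ξ hlt).trans
        ((le_max_right _ _))).trans_lt hbΛ
  exact lt_irrefl Λ this

theorem psiB_eq (θ α : Ordinal) : psiB θ α = sInf {β | β ∉ BB θ α} := by
  conv_lhs => rw [psiB, WellFounded.fix_eq]
  rfl

theorem psiB_not_mem (θ α : Ordinal) : psiB θ α ∉ BB θ α := by
  rw [psiB_eq]
  exact csInf_mem (exists_not_mem_BB θ α)

theorem psiB_mono {θ α α' : Ordinal} (h : α ≤ α') : psiB θ α ≤ psiB θ α' := by
  rw [psiB_eq, psiB_eq]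
  exact csInf_le_csInf (OrderBot.bddBelow _) (exists_not_mem_BB θ α')
    (fun β hβ hmem => hβ (BB_mono h hmem))

theorem stmt19 (θ η : Ordinal) (hη : η ∈ BB θ η) :
    (∀ α, α ∈ BB θ (η + 1) →
        (η + Ordinal.omega0 ^ (OmegaB θ + α)) ∈ BB θ (η + Ordinal.omega0 ^ (OmegaB θ + α)) ∧
        psiB θ (η + Ordinal.omega0 ^ (OmegaB θ + α)) ∈ BB θ ((η + Ordinal.omega0 ^ (OmegaB θ + α)) + 1)) ∧
    (∀ α₀ α, α₀ ∈ BB θ (η + 1) → α₀ < α →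
        psiB θ (η + Ordinal.omega0 ^ (OmegaB θ + α₀)) < psiB θ (η + Ordinal.omega0 ^ (OmegaB θ + α))) := by
  have key : ∀ α, α ∈ BB θ (η + 1) →
      (η + omega0 ^ (OmegaB θ + α)) ∈ BB θ (η + omega0 ^ (OmegaB θ + α)) ∧
      psiB θ (η + omega0 ^ (OmegaB θ + α)) ∈ BB θ ((η + omega0 ^ (OmegaB θ + α)) + 1) := by
    intro α hα
    set a : Ordinal := η + omega0 ^ (OmegaB θ + α) with ha
    have hη1 : η ∈ BB θ (η + 1) := BB_mono (le_self_add) hη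
    have hpow : omega0 ^ (OmegaB θ + α) ∈ BB θ (η + 1) := by
      rw [← _root_.veblen_zero]
      exact veblen_mem_BB (zero_mem_BB θ _) (add_mem_BB (OmegaB_mem_BB θ _) hα)
    have hhat : a ∈ BB θ (η + 1) := add_mem_BB hη1 hpow
    have hle : η + 1 ≤ a :=
      add_le_add_right (Order.one_le_iff_pos.2 (opow_pos _ omega0_pos)) η
    have h1 : a ∈ BB θ a := BB_mono hle hhat
    refine ⟨h1, ?_⟩
    have h2 : a ∈ BB θ (a + 1) := BB_mono (le_self_add) h1
    have hlt : a < a + 1 := by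
      rw [Ordinal.add_one_eq_succ]; exact Order.lt_succ a
    exact psiB_mem_BB hlt h2
  refine ⟨key, ?_⟩
  intro α₀ α hα₀ hlt
  set a₀ : Ordinal := η + omega0 ^ (OmegaB θ + α₀) with ha₀
  set a : Ordinal := η + omega0 ^ (OmegaB θ + α) with ha
  have hhatlt : a₀ < a := by
    apply (add_lt_add_iff_left η).2
    exact (opow_lt_opow_iff_right one_lt_omega0).2 ((add_lt_add_iff_left _).2 hlt)
  have hpsi0 : psiB θ a₀ ∈ BB θ (a₀ + 1) := (key α₀ hα₀).2
  have hsub : psiB θ a₀ ∈ BB θ a := by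
    apply BB_mono _ hpsi0
    rwa [Ordinal.add_one_eq_succ, Order.succ_le_iff]
  have hle : psiB θ a₀ ≤ psiB θ a := psiB_mono hhatlt.le
  rcases lt_or_eq_of_le hle with h | h
  · exact h
  · exact absurd (h ▸ hsub) (psiB_not_mem θ a)
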